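/- For any weak composition a, there is a weight-preserving bijection between QLSSF(a) (set-valued quasi-skyline fillings of shape a) and the disjoint union of LASSF(b) (semistandard set-valued skyline fillings of shape b) over all weak compositions b with b ≥ a in dominance order and b⁺ = a⁺; consequently Q̄_a = Σ_{S ∈ QLSSF(a)} β^{|S|−|a|} x^{wt(S)}. -/

import Mathlib

def Dominates (b a : List ℕ) : Prop :=
  b.length = a.length ∧ ∀ i : ℕ, (a.take i).sum ≤ (b.take i).sum

def posPart (a : List ℕ) : List ℕ := a.filter (fun v => v != 0)
def skyline (a : List ℕ) : Finset (ℕ × ℕ) :=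
  (Finset.range a.length).biUnion fun i =>
    (Finset.range (a.getD i 0)).image fun j => (i + 1, j + 1)
abbrev SVF : Type := ℕ → ℕ → Finset ℕ

def shapeLen (b : List ℕ) (i : ℕ) : ℕ := b.getD (i - 1) 0

def SBox (b : List ℕ) (i j : ℕ) : Prop :=
  1 ≤ i ∧ i ≤ b.length ∧ 1 ≤ j ∧ j ≤ shapeLen b i

def anc (F : SVF) (i j : ℕ) : ℕ := (F i j).sup id

noncomputable def infv (F : SVF) (i j : ℕ) : ℕ := sInf (F i j : Set ℕ)

def InvTriple (be al ga : ℕ) : Prop := (ga < al ∧ al ≤ be) ∨ (al ≤ be ∧ be < ga)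

def RowOK (b : List ℕ) (F : SVF) (i j v : ℕ) : Prop :=
  (j = 1 ∨ v ≤ infv F i (j - 1)) ∧ (¬ SBox b i (j + 1) ∨ anc F i (j + 1) ≤ v)

def SVSSF (b : List ℕ) (F : SVF) : Prop :=
  (∀ i j, (F i j).Nonempty ↔ SBox b i j) ∧
  (∀ i j v, v ∈ F i j → 0 < v) ∧
  (∀ j i i', i ≠ i' → ∀ v, v ∈ F i j → v ∉ F i' j) ∧
  (∀ i j, SBox b i j → SBox b i (j + 1) → anc F i (j + 1) ≤ infv F i j) ∧
  (∀ i i' j, i < i' → SBox b i j → SBox b i (j + 1) → SBox b i' (j + 1) →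
      shapeLen b i' ≤ shapeLen b i → InvTriple (anc F i j) (anc F i (j + 1)) (anc F i' (j + 1))) ∧
  (∀ i i' j, i < i' → SBox b i' j → SBox b i' (j + 1) → SBox b i j →
      shapeLen b i < shapeLen b i' → InvTriple (anc F i' j) (anc F i' (j + 1)) (anc F i j)) ∧
  (∀ i j v, SBox b i j → v ∈ F i j → v ≠ anc F i j →
      ∀ i', SBox b i' j → anc F i' j < anc F i j → v < anc F i' j → ¬ RowOK b F i' j v)

def LASSF (b : List ℕ) (F : SVF) : Prop :=
  SVSSF b F ∧ ∀ i, SBox b i 1 → anc F i 1 = i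

def wtF (b : List ℕ) (F : SVF) (v : ℕ) : ℕ :=
  ((skyline b).filter fun p => v ∈ F p.1 p.2).card

def sizeF (b : List ℕ) (F : SVF) : ℕ := ∑ p ∈ skyline b, (F p.1 p.2).card
noncomputable def vmono (w : ℕ → ℕ) : MvPolynomial ℕ (Polynomial ℤ) :=
  ∏ᶠ v, MvPolynomial.X v ^ w v

noncomputable def atomPoly (b : List ℕ) : MvPolynomial ℕ (Polynomial ℤ) :=
  ∑ᶠ F ∈ {F : SVF | LASSF b F},
    MvPolynomial.C (Polynomial.X ^ (sizeF b F - b.sum)) * vmono (wtF b F)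

noncomputable def quasiLascoux (a : List ℕ) : MvPolynomial ℕ (Polynomial ℤ) :=
  ∑ᶠ b ∈ {b : List ℕ | Dominates b a ∧ posPart b = posPart a}, atomPoly b

def QLSSF (b : List ℕ) (F : SVF) : Prop :=
  SVSSF b F ∧ (∀ i, SBox b i 1 → anc F i 1 ≤ i) ∧
    ∀ i i', SBox b i 1 → SBox b i' 1 → i < i' → anc F i 1 < anc F i' 1


def aval (l : List ℕ) (k : ℕ) : ℕ := l.getD k 0

def supp (l : List ℕ) : List ℕ := (List.range l.length).filter fun k => aval l k != 0

lemma mem_supp {l : List ℕ} {k : ℕ} : k ∈ supp l ↔ k < l.length ∧ aval l k ≠ 0 := by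
  simp [supp, List.mem_filter, List.mem_range]

lemma supp_sorted (l : List ℕ) : (supp l).Pairwise (· < ·) :=
  List.Pairwise.sublist (List.filter_sublist) (List.pairwise_lt_range)

lemma supp_nodup (l : List ℕ) : (supp l).Nodup :=
  (supp_sorted l).imp ne_of_lt

lemma aval_eq_getElem {l : List ℕ} {k : ℕ} (h : k < l.length) : aval l k = l[k] :=
  List.getD_eq_getElem l 0 h

lemma self_eq_map (l : List ℕ) : l = (List.range l.length).map (aval l) := by
  apply List.ext_getElem (by simp)
  intro n h1 h2
  simp [aval_eq_getElem h1]

lemma posPart_eq (l : List ℕ) : posPart l = (supp l).map (aval l) := by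
  show List.filter (fun v => v != 0) l = _
  conv_lhs => rw [self_eq_map l]
  rw [List.filter_map]
  rfl

lemma map_filter_sum (r : List ℕ) (f : ℕ → ℕ) :
    (((r.filter fun k => f k != 0)).map f).sum = (r.map f).sum := by
  induction r with
  | nil => simp
  | cons x r ih =>
    by_cases h : f x = 0 <;> simp [List.filter_cons, h, ih]

lemma range_filter_lt (n N : ℕ) :
    ((List.range n).filter fun k => k < N) = List.range (min N n) := by
  induction n with
  | zero => simp
  | succ n ih =>
    rw [List.range_succ, List.filter_append, ih]
    by_cases h : n < N
    · have : min N (n+1) = n + 1 := by omega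
      have h2 : min N n = n := by omega
      simp [h, this, h2, List.range_succ]
    · have : min N (n+1) = min N n := by omega
      simp [h, this]

lemma sum_take_eq (l : List ℕ) (N : ℕ) :
    (l.take N).sum = ((((supp l).filter fun k => k < N)).map (aval l)).sum := by
  conv_lhs => rw [self_eq_map l]
  rw [← List.map_take, List.take_range]
  rw [supp, List.filter_filter]
  rw [← range_filter_lt l.length N]
  rw [← map_filter_sum ((List.range l.length).filter fun k => k < N) (aval l)]
  rw [List.filter_filter]
  congr 2
  apply List.filter_congr
  intro x _
  exact Bool.and_comm _ _

def ltrans (t s : List ℕ) (x : ℕ) : ℕ := s.getD (List.idxOf x t) 0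

lemma indexOf_lt {t : List ℕ} {x : ℕ} (hx : x ∈ t) : List.idxOf x t < t.length :=
  List.idxOf_lt_length_iff.mpr hx

lemma ltrans_eq {t s : List ℕ} (hl : t.length = s.length) {x : ℕ} (hx : x ∈ t) :
    ltrans t s x = s[List.idxOf x t]'(hl ▸ indexOf_lt hx) :=
  List.getD_eq_getElem s 0 _

lemma ltrans_mem {t s : List ℕ} (hl : t.length = s.length) {x : ℕ} (hx : x ∈ t) :
    ltrans t s x ∈ s := by
  rw [ltrans_eq hl hx]; exact List.getElem_mem _

lemma ltrans_getElem {t s : List ℕ} (ht : t.Nodup) (hl : t.length = s.length)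
    {k : ℕ} (hk : k < t.length) : ltrans t s (t[k]) = s[k]'(hl ▸ hk) := by
  have h1 : List.idxOf t[k] t = k := ht.idxOf_getElem k hk
  rw [ltrans, h1, List.getD_eq_getElem s 0 (hl ▸ hk)]

lemma ltrans_val {t s : List ℕ} {f g : ℕ → ℕ} (hv : t.map f = s.map g)
    {x : ℕ} (hx : x ∈ t) : g (ltrans t s x) = f x := by
  have hl : t.length = s.length := by simpa using congrArg List.length hv
  rw [ltrans_eq hl hx]
  have h1 : (t.map f).getD (List.idxOf x t) 0 = (s.map g).getD (List.idxOf x t) 0 := by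
    rw [hv]
  rw [List.getD_eq_getElem _ 0 (by simpa using indexOf_lt hx),
      List.getD_eq_getElem _ 0 (by simpa [hl] using indexOf_lt hx)] at h1
  simpa [List.getElem_idxOf] using h1.symm

lemma ltrans_mono {t s : List ℕ} (hst : t.Pairwise (· < ·)) (hss : s.Pairwise (· < ·))
    (hl : t.length = s.length) {x y : ℕ} (hx : x ∈ t) (hy : y ∈ t) (hxy : x < y) :
    ltrans t s x < ltrans t s y := by
  rw [ltrans_eq hl hx, ltrans_eq hl hy]
  have hk : List.idxOf x t < List.idxOf y t := by
    rcases lt_trichotomy (List.idxOf x t) (List.idxOf y t) with h | h | h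
    · exact h
    · exfalso
      have : x = y := by
        have h1 : t.getD (List.idxOf x t) 0 = x := by
          rw [List.getD_eq_getElem _ 0 (indexOf_lt hx), List.getElem_idxOf]
        have h2 : t.getD (List.idxOf y t) 0 = y := by
          rw [List.getD_eq_getElem _ 0 (indexOf_lt hy), List.getElem_idxOf]
        rw [← h1, ← h2, h]
      omega
    · exfalso
      have := (List.pairwise_iff_getElem.mp hst) _ _ (indexOf_lt hy) (indexOf_lt hx) h
      rw [List.getElem_idxOf, List.getElem_idxOf] at this
      omega
  exact (List.pairwise_iff_getElem.mp hss) _ _ _ _ hk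

lemma ltrans_ltrans {t s : List ℕ} (hs : s.Nodup)
    (hl : t.length = s.length) {x : ℕ} (hx : x ∈ t) :
    ltrans s t (ltrans t s x) = x := by
  rw [ltrans_eq hl hx]
  have h1 : List.idxOf (s[List.idxOf x t]'(hl ▸ indexOf_lt hx)) s = List.idxOf x t :=
    hs.idxOf_getElem _ _
  rw [ltrans, h1, List.getD_eq_getElem t 0 (indexOf_lt hx), List.getElem_idxOf]

lemma map_ltrans {t s : List ℕ} (ht : t.Nodup) (hl : t.length = s.length) :
    t.map (ltrans t s) = s := by
  apply List.ext_getElem (by simpa using hl)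
  intro n h1 h2
  simp only [List.getElem_map]
  exact ltrans_getElem ht hl (by simpa using h1)

def rowT (c d : List ℕ) (i : ℕ) : ℕ :=
  if 1 ≤ i ∧ (i-1) ∈ supp c then ltrans (supp c) (supp d) (i-1) + 1 else 0

def rmap (σ : ℕ → ℕ) (F : SVF) : SVF := fun i j => F (σ i) j

lemma SBox_one {c : List ℕ} {i j : ℕ} (h : SBox c i j) : SBox c i 1 :=
  ⟨h.1, h.2.1, le_refl 1, le_trans h.2.2.1 h.2.2.2⟩

lemma shapeLen_eq_aval (c : List ℕ) (i : ℕ) : shapeLen c i = aval c (i-1) := rfl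

lemma SBox_iff_supp {c : List ℕ} {i : ℕ} : SBox c i 1 ↔ 1 ≤ i ∧ (i-1) ∈ supp c := by
  constructor
  · intro h
    have ha := h.1
    have hb := h.2.1
    refine ⟨ha, mem_supp.mpr ⟨by omega, ?_⟩⟩
    have := h.2.2.2
    rw [shapeLen_eq_aval] at this
    omega
  · rintro ⟨h1, h2⟩
    rw [mem_supp] at h2
    obtain ⟨h2a, h2b⟩ := h2
    exact ⟨h1, by omega, le_refl 1, by rw [shapeLen_eq_aval]; omega⟩

lemma rowT_eq {c d : List ℕ} {i : ℕ} (h : SBox c i 1) :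
    rowT c d i = ltrans (supp c) (supp d) (i-1) + 1 := if_pos (SBox_iff_supp.mp h)

lemma rowT_eq_zero {c d : List ℕ} {i : ℕ} (h : ¬ SBox c i 1) : rowT c d i = 0 :=
  if_neg (fun hc => h (SBox_iff_supp.mpr hc))

section Transport

variable {c d : List ℕ} (hlen : c.length = d.length) (hpp : posPart c = posPart d)

include hlen hpp

lemma supp_map_eq : (supp c).map (aval c) = (supp d).map (aval d) := by
  rw [← posPart_eq, ← posPart_eq, hpp]

lemma supp_len_eq : (supp c).length = (supp d).length := by
  simpa using congrArg List.length (supp_map_eq hlen hpp)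

lemma rowT_box {i : ℕ} (h : SBox c i 1) :
    SBox d (rowT c d i) 1 ∧ shapeLen d (rowT c d i) = shapeLen c i := by
  have hx : (i-1) ∈ supp c := (SBox_iff_supp.mp h).2
  have hy : ltrans (supp c) (supp d) (i-1) ∈ supp d :=
    ltrans_mem (supp_len_eq hlen hpp) hx
  rw [rowT_eq h]
  rw [mem_supp] at hy
  have hval : aval d (ltrans (supp c) (supp d) (i-1)) = aval c (i-1) :=
    ltrans_val (supp_map_eq hlen hpp) hx
  have hsh : shapeLen d (ltrans (supp c) (supp d) (i-1) + 1) = shapeLen c i := by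
    rw [shapeLen_eq_aval, shapeLen_eq_aval, Nat.add_sub_cancel, hval]
  refine ⟨⟨by omega, by omega, le_refl 1, ?_⟩, hsh⟩
  rw [hsh, shapeLen_eq_aval]
  rw [mem_supp] at hx
  omega

lemma rowT_SBox (i j : ℕ) : SBox c i j ↔ SBox d (rowT c d i) j := by
  by_cases h : SBox c i 1
  · obtain ⟨hb, hs⟩ := rowT_box hlen hpp h
    constructor
    · intro hj
      exact ⟨hb.1, hb.2.1, hj.2.2.1, by rw [hs]; exact hj.2.2.2⟩
    · intro hj
      exact ⟨h.1, h.2.1, hj.2.2.1, by rw [← hs]; exact hj.2.2.2⟩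
  · rw [rowT_eq_zero h]
    constructor
    · intro hj; exact absurd (SBox_one hj) h
    · intro hj; exact absurd hj.1 (by omega)

lemma rowT_mono {i i' : ℕ} (h : SBox c i 1) (h' : SBox c i' 1) (hii : i < i') :
    rowT c d i < rowT c d i' := by
  rw [rowT_eq h, rowT_eq h']
  have := ltrans_mono (supp_sorted c) (supp_sorted d) (supp_len_eq hlen hpp)
    (SBox_iff_supp.mp h).2 (SBox_iff_supp.mp h').2 (by have := h.1; omega)
  omega

lemma rowT_rowT {i : ℕ} (h : SBox c i 1) : rowT d c (rowT c d i) = i := by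
  have hx : (i-1) ∈ supp c := (SBox_iff_supp.mp h).2
  have hy : ltrans (supp c) (supp d) (i-1) ∈ supp d :=
    ltrans_mem (supp_len_eq hlen hpp) hx
  rw [rowT_eq h, rowT_eq (SBox_iff_supp.mpr ⟨by omega, by simpa using hy⟩)]
  rw [Nat.add_sub_cancel, ltrans_ltrans (supp_nodup d) (supp_len_eq hlen hpp) hx]
  have := h.1; omega

end Transport

lemma mem_skyline {l : List ℕ} {p : ℕ × ℕ} : p ∈ skyline l ↔ SBox l p.1 p.2 := by
  obtain ⟨x, y⟩ := p
  simp only [skyline, Finset.mem_biUnion, Finset.mem_range, Finset.mem_image, Prod.mk.injEq]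
  constructor
  · rintro ⟨i, hi, j, hj, hx, hy⟩
    refine ⟨by omega, by omega, by omega, ?_⟩
    rw [shapeLen_eq_aval, aval]
    have : x - 1 = i := by omega
    rw [this]
    omega
  · rintro ⟨h1, h2, h3, h4⟩
    rw [shapeLen_eq_aval, aval] at h4
    exact ⟨x - 1, by omega, y - 1, by omega, by omega, by omega⟩


section Transport2

variable {c d : List ℕ} (hlen : d.length = c.length) (hpp : posPart d = posPart c)

include hlen hpp

lemma RowOK_transport {F : SVF} (i' j v : ℕ) :
    RowOK d (rmap (rowT d c) F) i' j v ↔ RowOK c F (rowT d c i') j v := by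
  have hiff := rowT_SBox hlen hpp i' (j+1)
  constructor
  · rintro ⟨h1, h2⟩
    refine ⟨h1, ?_⟩
    rcases h2 with h2 | h2
    · exact Or.inl (fun hc => h2 (hiff.mpr hc))
    · exact Or.inr h2
  · rintro ⟨h1, h2⟩
    refine ⟨h1, ?_⟩
    rcases h2 with h2 | h2
    · exact Or.inl (fun hc => h2 (hiff.mp hc))
    · exact Or.inr h2

lemma SVSSF_transport {F : SVF} (hF : SVSSF c F) : SVSSF d (rmap (rowT d c) F) := by
  obtain ⟨h1, h2, h3, h4, h5, h6, h7⟩ := hF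
  have hiff : ∀ i j, SBox d i j ↔ SBox c (rowT d c i) j := rowT_SBox hlen hpp
  have hne : ∀ i j, ((rmap (rowT d c) F) i j).Nonempty ↔ SBox d i j := fun i j =>
    (h1 (rowT d c i) j).trans (hiff i j).symm
  refine ⟨hne, fun i j v hv => h2 _ _ _ hv, ?_, ?_, ?_, ?_, ?_⟩
  · -- column distinctness
    intro j i i' hii v hv hv'
    have b1 : SBox d i j := (hne i j).mp ⟨v, hv⟩
    have b2 : SBox d i' j := (hne i' j).mp ⟨v, hv'⟩
    have hσ : rowT d c i ≠ rowT d c i' := by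
      rcases lt_trichotomy i i' with h | h | h
      · exact ne_of_lt (rowT_mono hlen hpp (SBox_one b1) (SBox_one b2) h)
      · exact absurd h hii
      · exact (ne_of_lt (rowT_mono hlen hpp (SBox_one b2) (SBox_one b1) h)).symm
    exact h3 j _ _ hσ v hv hv'
  · -- row weakly decreasing
    intro i j hb1 hb2
    exact h4 _ _ ((hiff i j).mp hb1) ((hiff i (j+1)).mp hb2)
  · -- type A triples
    intro i i' j hii hb1 hb2 hb3 hsh
    have m1 := (hiff i j).mp hb1
    have m2 := (hiff i (j+1)).mp hb2
    have m3 := (hiff i' (j+1)).mp hb3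
    have hmono := rowT_mono hlen hpp (SBox_one hb1) (SBox_one hb3) hii
    have e1 := (rowT_box hlen hpp (SBox_one hb1)).2
    have e2 := (rowT_box hlen hpp (SBox_one hb3)).2
    exact h5 _ _ j hmono m1 m2 m3 (by rw [e1, e2]; exact hsh)
  · -- type B triples
    intro i i' j hii hb1 hb2 hb3 hsh
    have m1 := (hiff i' j).mp hb1
    have m2 := (hiff i' (j+1)).mp hb2
    have m3 := (hiff i j).mp hb3
    have hmono := rowT_mono hlen hpp (SBox_one hb3) (SBox_one hb1) hii
    have e1 := (rowT_box hlen hpp (SBox_one hb1)).2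
    have e2 := (rowT_box hlen hpp (SBox_one hb3)).2
    exact h6 _ _ j hmono m1 m2 m3 (by rw [e1, e2]; exact hsh)
  · -- free entry minimality
    intro i j v hb hv hvne i' hb' hlt hvlt
    intro hR
    exact h7 _ _ v ((hiff i j).mp hb) hv hvne _ ((hiff i' j).mp hb') hlt hvlt
      ((RowOK_transport hlen hpp i' j v).mp hR)

lemma rmap_roundtrip {F : SVF} (hF : ∀ i j, (F i j).Nonempty ↔ SBox c i j) :
    rmap (rowT c d) (rmap (rowT d c) F) = F := by
  funext i j
  by_cases h : SBox c i 1
  · show F (rowT d c (rowT c d i)) j = F i j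
    rw [rowT_rowT hlen.symm hpp.symm h]
  · have hz : rowT c d i = 0 := rowT_eq_zero h
    show F (rowT d c (rowT c d i)) j = F i j
    rw [hz]
    have hz2 : rowT d c 0 = 0 := rowT_eq_zero (by intro hc; exact absurd hc.1 (by omega))
    rw [hz2]
    have e1 : F 0 j = ∅ := by
      rw [← Finset.not_nonempty_iff_eq_empty, hF]
      intro hc; exact absurd hc.1 (by omega)
    have e2 : F i j = ∅ := by
      rw [← Finset.not_nonempty_iff_eq_empty, hF]
      intro hc; exact h (SBox_one hc)
    rw [e1, e2]

lemma wtF_transport {F : SVF} (v : ℕ) : wtF d (rmap (rowT d c) F) v = wtF c F v := by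
  apply Finset.card_bij' (fun p _ => ((rowT d c p.1, p.2) : ℕ × ℕ))
    (fun q _ => ((rowT c d q.1, q.2) : ℕ × ℕ))
  · intro p hp
    rw [Finset.mem_filter, mem_skyline] at hp ⊢
    exact ⟨(rowT_SBox hlen hpp p.1 p.2).mp hp.1, hp.2⟩
  · intro q hq
    rw [Finset.mem_filter, mem_skyline] at hq ⊢
    have h1 : SBox d (rowT c d q.1) q.2 := (rowT_SBox hlen.symm hpp.symm q.1 q.2).mp hq.1
    refine ⟨h1, ?_⟩
    show v ∈ F (rowT d c (rowT c d q.1)) q.2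
    rw [rowT_rowT hlen.symm hpp.symm (SBox_one hq.1)]
    exact hq.2
  · intro p hp
    rw [Finset.mem_filter, mem_skyline] at hp
    have := rowT_rowT hlen hpp (SBox_one hp.1)
    exact Prod.ext (by simpa using this) rfl
  · intro q hq
    rw [Finset.mem_filter, mem_skyline] at hq
    have := rowT_rowT hlen.symm hpp.symm (SBox_one hq.1)
    exact Prod.ext (by simpa using this) rfl

lemma sizeF_transport {F : SVF} : sizeF d (rmap (rowT d c) F) = sizeF c F := by
  apply Finset.sum_bij' (fun p _ => ((rowT d c p.1, p.2) : ℕ × ℕ))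
    (fun q _ => ((rowT c d q.1, q.2) : ℕ × ℕ))
  · intro p hp
    rw [mem_skyline] at hp ⊢
    exact (rowT_SBox hlen hpp p.1 p.2).mp hp
  · intro q hq
    rw [mem_skyline] at hq ⊢
    exact (rowT_SBox hlen.symm hpp.symm q.1 q.2).mp hq
  · intro p hp
    rw [mem_skyline] at hp
    have := rowT_rowT hlen hpp (SBox_one hp)
    exact Prod.ext (by simpa using this) rfl
  · intro q hq
    rw [mem_skyline] at hq
    have := rowT_rowT hlen.symm hpp.symm (SBox_one hq)
    exact Prod.ext (by simpa using this) rfl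
  · intro p hp
    rfl

end Transport2

lemma ltrans_map {s : List ℕ} {φ : ℕ → ℕ} (hnd : (s.map φ).Nodup) {x : ℕ} (hx : x ∈ s) :
    ltrans (s.map φ) s (φ x) = x := by
  have hk : List.idxOf x s < s.length := indexOf_lt hx
  have h1 : (s.map φ)[List.idxOf x s]'(by simpa using hk) = φ x := by
    rw [List.getElem_map, List.getElem_idxOf]
  have h2 : List.idxOf (φ x) (s.map φ) = List.idxOf x s := by
    rw [← h1]
    exact hnd.idxOf_getElem _ _
  rw [ltrans, h2, List.getD_eq_getElem s 0 hk, List.getElem_idxOf]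

lemma sorted_filter_succ {l : List ℕ} (hs : l.Pairwise (· < ·)) {k : ℕ} (hk : k < l.length)
    {M : ℕ} (hM : M = l[k]) :
    l.filter (fun x => x < M + 1) = l.take (k+1) := by
  have hp := List.pairwise_iff_getElem.mp hs
  conv_lhs => rw [← List.take_append_drop (k+1) l]
  rw [List.filter_append]
  have h1 : (l.take (k+1)).filter (fun x => x < M + 1) = l.take (k+1) := by
    rw [List.filter_eq_self]
    intro x hx
    obtain ⟨i, hi, hix⟩ := List.mem_take_iff_getElem.mp hx
    rcases Nat.lt_or_ge i k with h | h
    · have := hp i k (by omega) hk h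
      simp only [decide_eq_true_eq]
      omega
    · have : i = k := by omega
      subst this
      simp only [decide_eq_true_eq]
      omega
  have h2 : (l.drop (k+1)).filter (fun x => x < M + 1) = [] := by
    rw [List.filter_eq_nil_iff]
    intro x hx
    obtain ⟨i, hi, hix⟩ := List.mem_iff_getElem.mp hx
    have hi' : i < l.length - (k+1) := by simpa using hi
    rw [List.getElem_drop] at hix
    have := hp k (k+1+i) hk (by omega) (by omega)
    simp only [decide_eq_true_eq]
    omega
  rw [h1, h2, List.append_nil]

lemma filter_lt_sublist_take {l : List ℕ} (hs : l.Pairwise (· < ·)) {k M : ℕ}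
    (hk : k < l.length) (hM : M < l[k] + 1) :
    (l.filter (fun x => x < M)).Sublist (l.take k) := by
  have hp := List.pairwise_iff_getElem.mp hs
  conv_lhs => rw [← List.take_append_drop k l]
  rw [List.filter_append]
  have h2 : (l.drop k).filter (fun x => x < M) = [] := by
    rw [List.filter_eq_nil_iff]
    intro x hx
    obtain ⟨i, hi, hix⟩ := List.mem_iff_getElem.mp hx
    have hi' : i < l.length - k := by simpa using hi
    rw [List.getElem_drop] at hix
    have hge : l[k] ≤ x := by
      rcases Nat.eq_zero_or_pos i with h | h
      · subst h; simp only [Nat.add_zero] at hix; omega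
      · have := hp k (k+i) hk (by omega) (by omega)
        omega
    simp only [decide_eq_true_eq]
    omega
  rw [h2, List.append_nil]
  exact List.filter_sublist

section Forward

variable (a : List ℕ) (F : SVF)

def phiF (x : ℕ) : ℕ := anc F (x+1) 1 - 1

def sbF : List ℕ := (supp a).map (phiF F)

def bF : List ℕ :=
  List.ofFn fun k : Fin a.length =>
    if ((k : ℕ) ∈ sbF a F) then aval a (ltrans (sbF a F) (supp a) (k : ℕ)) else 0

variable {a F}

variable (hQ : QLSSF a F)

include hQ

lemma anc_pos {i : ℕ} (h : SBox a i 1) : 1 ≤ anc F i 1 := by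
  obtain ⟨v, hv⟩ := (hQ.1.1 i 1).mpr h
  have h1 := hQ.1.2.1 i 1 v hv
  have h2 : v ≤ anc F i 1 := Finset.le_sup (f := id) hv
  omega

omit hQ in
lemma supp_SBox {x : ℕ} (hx : x ∈ supp a) : SBox a (x+1) 1 :=
  SBox_iff_supp.mpr ⟨by omega, by simpa using hx⟩

lemma phiF_mono : ∀ x ∈ supp a, ∀ y ∈ supp a, x < y → phiF F x < phiF F y := by
  intro x hx y hy hxy
  have h1 := hQ.2.2 (x+1) (y+1) (supp_SBox hx) (supp_SBox hy) (by omega)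
  have h2 := anc_pos hQ (supp_SBox hx)
  unfold phiF
  omega

lemma phiF_le : ∀ x ∈ supp a, phiF F x ≤ x := by
  intro x hx
  have h1 := hQ.2.1 (x+1) (supp_SBox hx)
  unfold phiF
  omega

lemma sbF_sorted : (sbF a F).Pairwise (· < ·) := by
  rw [sbF, List.pairwise_map]
  exact (supp_sorted a).imp_of_mem (fun hx hy h => phiF_mono hQ _ hx _ hy h)

lemma sbF_nodup : (sbF a F).Nodup := (sbF_sorted hQ).imp ne_of_lt

omit hQ in
lemma sbF_len : (sbF a F).length = (supp a).length := by simp [sbF]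

lemma mem_sbF_lt {k : ℕ} (hk : k ∈ sbF a F) : k < a.length := by
  obtain ⟨x, hx, hxk⟩ := List.mem_map.mp hk
  have h1 := phiF_le hQ x hx
  have h2 := (mem_supp.mp hx).1
  omega

omit hQ in
lemma bF_len : (bF a F).length = a.length := by simp [bF]

lemma bF_aval (k : ℕ) :
    aval (bF a F) k =
      if (k ∈ sbF a F) then aval a (ltrans (sbF a F) (supp a) k) else 0 := by
  rcases Nat.lt_or_ge k a.length with h | h
  · rw [aval, List.getD_eq_getElem _ 0 (by simpa [bF_len] using h)]
    simp [bF]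
  · rw [aval, List.getD_eq_default _ 0 (by simpa [bF_len] using h)]
    rw [if_neg]
    intro hc
    exact absurd (mem_sbF_lt hQ hc) (by omega)

lemma supp_bF : supp (bF a F) = sbF a F := by
  have hmem : ∀ k, k ∈ supp (bF a F) ↔ k ∈ sbF a F := by
    intro k
    rw [mem_supp, bF_aval hQ]
    constructor
    · rintro ⟨h1, h2⟩
      by_contra hc
      rw [if_neg hc] at h2
      exact h2 rfl
    · intro hk
      refine ⟨by rw [bF_len]; exact mem_sbF_lt hQ hk, ?_⟩
      rw [if_pos hk]
      have := ltrans_mem (t := sbF a F) (s := supp a) (by rw [sbF_len]) hk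
      exact (mem_supp.mp this).2
  have hperm : (supp (bF a F)).Perm (sbF a F) :=
    ((supp_nodup _).subperm (fun x hx => (hmem x).mp hx)).antisymm
      ((sbF_nodup hQ).subperm (fun x hx => (hmem x).mpr hx))
  exact hperm.eq_of_pairwise (fun _ _ _ _ h1 h2 => absurd (lt_trans h1 h2) (lt_irrefl _)) (supp_sorted _) (sbF_sorted hQ)

lemma bF_valmap : (sbF a F).map (aval (bF a F)) = (supp a).map (aval a) := by
  apply List.ext_getElem (by simp [sbF_len])
  intro n h1 h2
  simp only [List.getElem_map]
  have hmem : (sbF a F)[n]'(by simpa using h1) ∈ sbF a F := List.getElem_mem _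
  rw [bF_aval hQ, if_pos hmem]
  congr 1
  exact ltrans_getElem (sbF_nodup hQ) (show (sbF a F).length = (supp a).length by rw [sbF_len]) (by simpa using h1)

lemma posPart_bF : posPart (bF a F) = posPart a := by
  rw [posPart_eq, posPart_eq, supp_bF hQ, bF_valmap hQ]

lemma dom_bF : Dominates (bF a F) a := by
  refine ⟨bF_len, fun N => ?_⟩
  rw [sum_take_eq a N, sum_take_eq (bF a F) N, supp_bF hQ]
  have e1 : (sbF a F).filter (fun k => k < N)
      = ((supp a).filter (fun x => phiF F x < N)).map (phiF F) := by
    rw [sbF, List.filter_map]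
    rfl
  rw [e1, List.map_map]
  have e2 : ((supp a).filter (fun x => phiF F x < N)).map (aval (bF a F) ∘ phiF F)
      = ((supp a).filter (fun x => phiF F x < N)).map (aval a) := by
    apply List.map_congr_left
    intro x hx
    have hxs : x ∈ supp a := List.mem_of_mem_filter hx
    have hxm : phiF F x ∈ sbF a F := List.mem_map_of_mem hxs
    show aval (bF a F) (phiF F x) = aval a x
    rw [bF_aval hQ, if_pos hxm]
    congr 1
    exact ltrans_map (by rw [← sbF]; exact sbF_nodup hQ) hxs
  rw [e2]
  have e3 : (supp a).filter (fun k => k < N)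
      = ((supp a).filter (fun x => phiF F x < N)).filter (fun k => k < N) := by
    rw [List.filter_filter]
    apply List.filter_congr
    intro x hx
    have := phiF_le hQ x hx
    by_cases h : x < N
    · have h2 : phiF F x < N := by omega
      simp [h, h2]
    · simp [h]
  rw [e3]
  apply List.Sublist.sum_le_sum
  · exact ((List.filter_sublist).map _)
  · intro y _; omega

lemma LASSF_bF : LASSF (bF a F) (rmap (rowT (bF a F) a) F) := by
  constructor
  · exact SVSSF_transport bF_len (posPart_bF hQ) hQ.1
  · intro i' h
    have h1 : 1 ≤ i' := h.1
    have hx : (i'-1) ∈ supp (bF a F) := (SBox_iff_supp.mp h).2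
    rw [supp_bF hQ] at hx
    obtain ⟨z, hz, hzx⟩ := List.mem_map.mp hx
    show anc F (rowT (bF a F) a i') 1 = i'
    rw [rowT_eq h, supp_bF hQ]
    rw [← hzx]
    show anc F (ltrans ((supp a).map (phiF F)) (supp a) (phiF F z) + 1) 1 = i'
    rw [ltrans_map (by rw [← sbF]; exact sbF_nodup hQ) hz]
    have := anc_pos hQ (supp_SBox hz)
    unfold phiF at hzx
    omega

end Forward

section Backward

variable {a b : List ℕ} {G : SVF}

lemma dom_pointwise (hDom : Dominates b a) (hpp : posPart b = posPart a)
    {x : ℕ} (hx : x ∈ supp a) : ltrans (supp a) (supp b) x ≤ x := by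
  have hm : (supp b).map (aval b) = (supp a).map (aval a) := supp_map_eq hDom.1 hpp
  have hsl : (supp b).length = (supp a).length := supp_len_eq hDom.1 hpp
  have hk : List.idxOf x (supp a) < (supp a).length := indexOf_lt hx
  have hk' : List.idxOf x (supp a) < (supp b).length := by omega
  have hxk : (supp a)[List.idxOf x (supp a)] = x := List.getElem_idxOf hk
  by_contra hcon
  push_neg at hcon
  rw [ltrans_eq hsl.symm hx] at hcon
  have hcon2 : x < (supp b)[List.idxOf x (supp a)]'hk' := hcon
  have hA : (a.take (x+1)).sum = (((supp a).take (List.idxOf x (supp a) + 1)).map (aval a)).sum := by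
    rw [sum_take_eq]
    rw [sorted_filter_succ (supp_sorted a) hk hxk.symm]
  have hBle : (b.take (x+1)).sum ≤ (((supp b).take (List.idxOf x (supp a))).map (aval b)).sum := by
    rw [sum_take_eq]
    apply List.Sublist.sum_le_sum
    · refine List.Sublist.map _ (filter_lt_sublist_take (supp_sorted b) hk' ?_)
      omega
    · intro y _; omega
  have hdom := hDom.2 (x+1)
  rw [hA] at hdom
  have e1 : (((supp a).take (List.idxOf x (supp a) + 1)).map (aval a)).sum
      = ((((supp a).map (aval a))).take (List.idxOf x (supp a) + 1)).sum := by rw [List.map_take]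
  have e2 : (((supp b).take (List.idxOf x (supp a))).map (aval b)).sum
      = ((((supp a).map (aval a))).take (List.idxOf x (supp a))).sum := by rw [List.map_take, hm]
  have hlenv : List.idxOf x (supp a) < ((supp a).map (aval a)).length := by simpa using hk
  have e3 := List.sum_take_succ ((supp a).map (aval a)) (List.idxOf x (supp a)) hlenv
  have e4 : ((supp a).map (aval a))[List.idxOf x (supp a)]'hlenv = aval a x := by
    rw [List.getElem_map]
    rw [hxk]
  have hpos : aval a x ≠ 0 := (mem_supp.mp hx).2
  rw [e1, e3, e4] at hdom
  rw [e2] at hBle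
  omega

lemma QLSSF_back (hDom : Dominates b a) (hpp : posPart b = posPart a) (hL : LASSF b G) :
    QLSSF a (rmap (rowT a b) G) := by
  have hlen : a.length = b.length := hDom.1.symm
  have hpp' : posPart a = posPart b := hpp.symm
  refine ⟨SVSSF_transport hlen hpp' hL.1, ?_, ?_⟩
  · intro i h
    have hb : SBox b (rowT a b i) 1 := (rowT_SBox hlen hpp' i 1).mp h
    show anc G (rowT a b i) 1 ≤ i
    rw [hL.2 _ hb, rowT_eq h]
    have := dom_pointwise hDom hpp (SBox_iff_supp.mp h).2
    have h1 := h.1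
    omega
  · intro i i' h h' hii
    show anc G (rowT a b i) 1 < anc G (rowT a b i') 1
    rw [hL.2 _ ((rowT_SBox hlen hpp' i 1).mp h), hL.2 _ ((rowT_SBox hlen hpp' i' 1).mp h')]
    exact rowT_mono hlen hpp' h h' hii

lemma bF_of_back (hDom : Dominates b a) (hpp : posPart b = posPart a) (hL : LASSF b G) :
    bF a (rmap (rowT a b) G) = b := by
  set F' := rmap (rowT a b) G with hF'
  have hQ' : QLSSF a F' := QLSSF_back hDom hpp hL
  have hlen : a.length = b.length := hDom.1.symm
  have hpp' : posPart a = posPart b := hpp.symm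
  have hsl : (supp a).length = (supp b).length := supp_len_eq hlen hpp'
  have step1 : ∀ x ∈ supp a, phiF F' x = ltrans (supp a) (supp b) x := by
    intro x hx
    have hbox : SBox a (x+1) 1 := supp_SBox hx
    have hb : SBox b (rowT a b (x+1)) 1 := (rowT_SBox hlen hpp' (x+1) 1).mp hbox
    have : anc F' (x+1) 1 = rowT a b (x+1) := hL.2 _ hb
    rw [phiF, this, rowT_eq hbox]
    simp
  have step2 : sbF a F' = supp b := by
    rw [sbF, List.map_congr_left step1]
    exact map_ltrans (supp_nodup a) hsl
  apply List.ext_getElem (by rw [bF_len, hlen])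
  intro n h1 h2
  have hv : aval (bF a F') n = aval b n := by
    rw [bF_aval hQ', step2]
    by_cases h : n ∈ supp b
    · rw [if_pos h]
      exact ltrans_val (supp_map_eq hDom.1 hpp) h
    · rw [if_neg h]
      rw [mem_supp] at h
      push_neg at h
      have := h (by omega)
      omega
  rw [← aval_eq_getElem h1, ← aval_eq_getElem h2, hv]

end Backward

lemma infv_le_anc {F : SVF} {i j : ℕ} (hne : (F i j).Nonempty) : infv F i j ≤ anc F i j := by
  have h1 : sInf ((F i j : Set ℕ)) ∈ ((F i j : Set ℕ)) :=
    Nat.sInf_mem (by exact_mod_cast hne)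
  have h2 : sInf ((F i j : Set ℕ)) ∈ F i j := by exact_mod_cast h1
  exact Finset.le_sup (f := id) h2

lemma anc_le_row {c : List ℕ} {F : SVF} (h1 : SVSSF c F)
    (h2 : ∀ i, SBox c i 1 → anc F i 1 ≤ i) :
    ∀ j i, SBox c i j → anc F i j ≤ i := by
  intro j
  induction j with
  | zero => intro i h; exact absurd h.2.2.1 (by omega)
  | succ j ih =>
    intro i h
    rcases Nat.eq_zero_or_pos j with hj | hj
    · subst hj; exact h2 i h
    · have hbj : SBox c i j := ⟨h.1, h.2.1, hj, by have := h.2.2.2; omega⟩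
      have h4 := h1.2.2.2.1 i j hbj h
      have h5 : infv F i j ≤ anc F i j := infv_le_anc ((h1.1 i j).mpr hbj)
      exact le_trans (le_trans h4 h5) (ih i hbj)

lemma entry_bound {c : List ℕ} {F : SVF} (h1 : SVSSF c F)
    (h2 : ∀ i, SBox c i 1 → anc F i 1 ≤ i) :
    ∀ i j v, v ∈ F i j → v ≤ c.length := by
  intro i j v hv
  have hb : SBox c i j := (h1.1 i j).mp ⟨v, hv⟩
  have h5 := anc_le_row h1 h2 j i hb
  have h3 : v ≤ anc F i j := Finset.le_sup (f := id) hv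
  have h4 := hb.2.1
  omega

lemma fillings_finite (c : List ℕ) :
    {F : SVF | SVSSF c F ∧ ∀ i, SBox c i 1 → anc F i 1 ≤ i}.Finite := by
  classical
  set Φ : ((↥(skyline c)) → Finset (Fin (c.length+1))) → SVF :=
    fun g i j => if h : (i, j) ∈ skyline c then (g ⟨(i,j), h⟩).image Fin.val else ∅ with hΦ
  apply Set.Finite.subset (Set.finite_range Φ)
  rintro F ⟨hF1, hF2⟩
  have hbd : ∀ (p : ↥(skyline c)), ∀ m ∈ F (p : ℕ × ℕ).1 (p : ℕ × ℕ).2, m < c.length + 1 := by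
    intro p m hm
    have := entry_bound hF1 hF2 _ _ m hm
    omega
  refine ⟨fun p => Finset.attachFin (F (p : ℕ × ℕ).1 (p : ℕ × ℕ).2) (hbd p), ?_⟩
  funext i j
  rw [hΦ]
  dsimp only
  by_cases h : (i, j) ∈ skyline c
  · rw [dif_pos h]
    ext m
    simp only [Finset.mem_image]
    constructor
    · rintro ⟨mf, hmf, rfl⟩
      exact (Finset.mem_attachFin _).mp hmf
    · intro hm
      have hlt : m < c.length + 1 := hbd ⟨(i,j), h⟩ m hm
      exact ⟨⟨m, hlt⟩, (Finset.mem_attachFin _).mpr hm, rfl⟩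
  · rw [dif_neg h]
    symm
    rw [← Finset.not_nonempty_iff_eq_empty, hF1.1 i j]
    intro hc
    exact h (mem_skyline.mpr hc)

lemma LASSF_finite (c : List ℕ) : {F : SVF | LASSF c F}.Finite :=
  (fillings_finite c).subset (fun F hF => ⟨hF.1, fun i h => le_of_eq (hF.2 i h)⟩)

lemma QLSSF_finite (c : List ℕ) : {F : SVF | QLSSF c F}.Finite :=
  (fillings_finite c).subset (fun F hF => ⟨hF.1, hF.2.1⟩)

lemma lists_finite (s : Finset ℕ) :
    ∀ n, {l : List ℕ | l.length = n ∧ ∀ x ∈ l, x ∈ s}.Finite := by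
  intro n
  induction n with
  | zero =>
    apply Set.Finite.subset (Set.finite_singleton ([] : List ℕ))
    rintro l ⟨h, _⟩
    simp [List.length_eq_zero_iff.mp h]
  | succ n ih =>
    apply Set.Finite.subset (Set.Finite.image2 List.cons s.finite_toSet ih)
    rintro l ⟨hl, hmem⟩
    cases l with
    | nil => simp at hl
    | cons x t =>
      exact ⟨x, by simpa using hmem x (List.mem_cons_self), t,
        ⟨by simpa using hl, fun y hy => hmem y (List.mem_cons_of_mem x hy)⟩, rfl⟩

lemma B_finite (a : List ℕ) : {b : List ℕ | Dominates b a ∧ posPart b = posPart a}.Finite := by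
  apply Set.Finite.subset (lists_finite (insert 0 a.toFinset) a.length)
  rintro b ⟨hDom, hpp⟩
  refine ⟨hDom.1, fun x hx => ?_⟩
  by_cases h : x = 0
  · simp [h]
  · have hxp : x ∈ posPart b := by
      show x ∈ b.filter _
      rw [List.mem_filter]
      exact ⟨hx, by simpa using h⟩
    rw [hpp] at hxp
    have : x ∈ a := List.mem_of_mem_filter hxp
    simp [this]

lemma sum_posPart (l : List ℕ) : (posPart l).sum = l.sum := by
  induction l with
  | nil => rfl
  | cons x t ih =>
    show (List.filter _ (x :: t)).sum = _
    rw [List.filter_cons]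
    by_cases h : x = 0
    · simp only [h]
      simpa using ih
    · have : ((x : ℕ) != 0) = true := by simpa using h
      rw [if_pos this]
      simpa using ih

theorem stmt7 (a : List ℕ) :
    (∃ e : {F : SVF // QLSSF a F} ≃
        {p : List ℕ × SVF // Dominates p.1 a ∧ posPart p.1 = posPart a ∧ LASSF p.1 p.2},
      ∀ F : {F : SVF // QLSSF a F},
        (∀ v, wtF (e F).1.1 (e F).1.2 v = wtF a F.1 v) ∧
          sizeF (e F).1.1 (e F).1.2 = sizeF a F.1) ∧
    quasiLascoux a = ∑ᶠ F ∈ {F : SVF | QLSSF a F},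
      MvPolynomial.C (Polynomial.X ^ (sizeF a F - a.sum)) * vmono (wtF a F) := by
  classical
  have hfwd : ∀ F : SVF, QLSSF a F →
      Dominates (bF a F) a ∧ posPart (bF a F) = posPart a ∧
        LASSF (bF a F) (rmap (rowT (bF a F) a) F) :=
    fun F hQ => ⟨dom_bF hQ, posPart_bF hQ, LASSF_bF hQ⟩
  have hbwd : ∀ p : List ℕ × SVF,
      (Dominates p.1 a ∧ posPart p.1 = posPart a ∧ LASSF p.1 p.2) →
        QLSSF a (rmap (rowT a p.1) p.2) :=
    fun p hp => QLSSF_back hp.1 hp.2.1 hp.2.2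
  have hli : ∀ F : SVF, QLSSF a F →
      rmap (rowT a (bF a F)) (rmap (rowT (bF a F) a) F) = F :=
    fun F hQ => rmap_roundtrip bF_len (posPart_bF hQ) hQ.1.1
  have hri : ∀ p : List ℕ × SVF,
      (Dominates p.1 a ∧ posPart p.1 = posPart a ∧ LASSF p.1 p.2) →
        ((bF a (rmap (rowT a p.1) p.2),
          rmap (rowT (bF a (rmap (rowT a p.1) p.2)) a) (rmap (rowT a p.1) p.2)) : List ℕ × SVF)
          = p := by
    rintro ⟨b, G⟩ ⟨hDom, hpp, hL⟩
    have hb : bF a (rmap (rowT a b) G) = b := bF_of_back hDom hpp hL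
    have h2 : rmap (rowT (bF a (rmap (rowT a b) G)) a) (rmap (rowT a b) G) = G := by
      rw [hb]
      exact rmap_roundtrip hDom.1.symm hpp.symm hL.1.1
    exact Prod.ext hb h2
  refine ⟨⟨{ toFun := fun F => ⟨(bF a F.1, rmap (rowT (bF a F.1) a) F.1), hfwd F.1 F.2⟩
             invFun := fun p => ⟨rmap (rowT a p.1.1) p.1.2, hbwd p.1 p.2⟩
             left_inv := fun F => Subtype.ext (hli F.1 F.2)
             right_inv := fun p => Subtype.ext (hri p.1 p.2) },
          fun F => ⟨fun v => wtF_transport bF_len (posPart_bF F.2) v,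
            sizeF_transport bF_len (posPart_bF F.2)⟩⟩, ?_⟩
  -- the generating function identity
  set B : Set (List ℕ) := {b : List ℕ | Dominates b a ∧ posPart b = posPart a} with hB
  set T : Set (List ℕ × SVF) :=
    {p : List ℕ × SVF | Dominates p.1 a ∧ posPart p.1 = posPart a ∧ LASSF p.1 p.2} with hT
  set t' : List ℕ × SVF → MvPolynomial ℕ (Polynomial ℤ) :=
    fun p => MvPolynomial.C (Polynomial.X ^ (sizeF p.1 p.2 - p.1.sum)) * vmono (wtF p.1 p.2)
    with ht'
  have stepB : ∀ b : List ℕ, atomPoly b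
      = ∑ᶠ p ∈ (({b} : Set (List ℕ)) ×ˢ {F : SVF | LASSF b F}), t' p := by
    intro b
    apply finsum_mem_eq_of_bijOn (fun F => ((b, F) : List ℕ × SVF))
    · refine ⟨fun F hF => Set.mem_prod.mpr ⟨rfl, hF⟩, ?_, ?_⟩
      · intro F1 _ F2 _ heq
        exact congrArg Prod.snd heq
      · intro p hp
        obtain ⟨hp1, hp2⟩ := Set.mem_prod.mp hp
        exact ⟨p.2, hp2, Prod.ext (Set.mem_singleton_iff.mp hp1).symm rfl⟩
    · intro F _
      rfl
  have hdisj : B.PairwiseDisjoint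
      (fun b => (({b} : Set (List ℕ)) ×ˢ {F : SVF | LASSF b F})) := by
    intro b1 _ b2 _ hne
    refine Set.disjoint_left.mpr ?_
    intro p hp1 hp2
    have e1 : p.1 = b1 := Set.mem_singleton_iff.mp (Set.mem_prod.mp hp1).1
    have e2 : p.1 = b2 := Set.mem_singleton_iff.mp (Set.mem_prod.mp hp2).1
    exact hne (e1 ▸ e2)
  have hfib : ∀ b ∈ B, ((({b} : Set (List ℕ)) ×ˢ {F : SVF | LASSF b F})).Finite :=
    fun b _ => (Set.finite_singleton b).prod (LASSF_finite b)
  have stepC := finsum_mem_biUnion hdisj (B_finite a) hfib (f := t')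
  have stepD : (⋃ b ∈ B, (({b} : Set (List ℕ)) ×ˢ {F : SVF | LASSF b F})) = T := by
    ext p
    simp only [Set.mem_iUnion, Set.mem_prod, Set.mem_singleton_iff, Set.mem_setOf_eq, hT, hB]
    constructor
    · rintro ⟨b, ⟨hDom, hpp⟩, rfl, hL⟩
      exact ⟨hDom, hpp, hL⟩
    · rintro ⟨hDom, hpp, hL⟩
      exact ⟨p.1, ⟨hDom, hpp⟩, rfl, hL⟩
  have stepE : (∑ᶠ F ∈ {F : SVF | QLSSF a F},
      MvPolynomial.C (Polynomial.X ^ (sizeF a F - a.sum)) * vmono (wtF a F))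
      = ∑ᶠ p ∈ T, t' p := by
    apply finsum_mem_eq_of_bijOn (fun F => ((bF a F, rmap (rowT (bF a F) a) F) : List ℕ × SVF))
    · refine ⟨fun F hF => hfwd F hF, ?_, ?_⟩
      · intro F1 h1 F2 h2 heq
        have g1 := hli F1 h1
        have g2 := hli F2 h2
        have := congrArg (fun p : List ℕ × SVF => rmap (rowT a p.1) p.2) heq
        simp only at this
        rw [g1, g2] at this
        exact this
      · intro p hp
        exact ⟨rmap (rowT a p.1) p.2, hbwd p hp, hri p hp⟩
    · intro F hF
      have hsum : (bF a F).sum = a.sum := by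
        rw [← sum_posPart (bF a F), posPart_bF hF, sum_posPart]
      have hsz : sizeF (bF a F) (rmap (rowT (bF a F) a) F) = sizeF a F :=
        sizeF_transport bF_len (posPart_bF hF)
      have hwt : wtF (bF a F) (rmap (rowT (bF a F) a) F) = wtF a F :=
        funext (wtF_transport bF_len (posPart_bF hF))
      rw [ht']
      dsimp only
      rw [hsum, hsz, hwt]
  calc quasiLascoux a
      = ∑ᶠ b ∈ B, atomPoly b := rfl
    _ = ∑ᶠ b ∈ B, ∑ᶠ p ∈ (({b} : Set (List ℕ)) ×ˢ {F : SVF | LASSF b F}), t' p :=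
        finsum_mem_congr rfl (fun b _ => stepB b)
    _ = ∑ᶠ p ∈ (⋃ b ∈ B, (({b} : Set (List ℕ)) ×ˢ {F : SVF | LASSF b F})), t' p := stepC.symm
    _ = ∑ᶠ p ∈ T, t' p := by rw [stepD]
    _ = ∑ᶠ F ∈ {F : SVF | QLSSF a F},
          MvPolynomial.C (Polynomial.X ^ (sizeF a F - a.sum)) * vmono (wtF a F) := stepE.symm
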